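/- Fix an odd integer n ≥ 7 and let H be the 6n × (4n²−2n) block–point incidence matrix of the construction, viewed over GF(2). Then: (i) every column of H has exactly 3 ones and every row of H has exactly 2n−1 ones; (ii) the inner product over ℤ of any two distinct rows of H, and of any two distinct columns of H, is at most 1 (so the associated Tanner graph has girth at least 6); (iii) the rank of H over GF(2) equals 6n−2, so the null space of H has dimension 4n²−8n+2 and the code rate is (4n²−8n+2)/(4n²−2n); and (iv) the minimum Hamming weight of a nonzero vector v ∈ GF(2)^{4n²−2n} with H v = 0 is exactly 6. -/

import Mathlib

def xfun (n j : ℕ) : ℕ := if j < n then 2 * j + 1 else 2 * (j - n)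

def Blk (n j a : ℕ) : Finset ℕ :=
  {a, (j + a) % (2 * n) + 2 * n, (xfun n j + a) % (2 * n) + 4 * n}

abbrev ColIdx (n : ℕ) := {p : Fin (2 * n) × Fin (2 * n) // (p.1 : ℕ) ≠ n}

/-- The 6n × (4n²-2n) block–point incidence matrix over GF(2). -/
def Hmat (n : ℕ) : Matrix (Fin (6 * n)) (ColIdx n) (ZMod 2) :=
  fun i p => if (i : ℕ) ∈ Blk n (p.1.1 : ℕ) (p.1.2 : ℕ) then 1 else 0

/-- The same 0/1 incidence matrix with entries in ℤ, for inner products over ℤ. -/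
def HmatZ (n : ℕ) : Matrix (Fin (6 * n)) (ColIdx n) ℤ :=
  fun i p => if (i : ℕ) ∈ Blk n (p.1.1 : ℕ) (p.1.2 : ℕ) then 1 else 0

namespace Aux17

variable {n : ℕ}

/-- components of a column -/
def colJ (p : ColIdx n) : ℕ := (p.1.1 : ℕ)
def colA (p : ColIdx n) : ℕ := (p.1.2 : ℕ)
def colB (p : ColIdx n) : ℕ := (colJ p + colA p) % (2 * n)
def colC (p : ColIdx n) : ℕ := (xfun n (colJ p) + colA p) % (2 * n)

lemma colJ_lt (p : ColIdx n) : colJ p < 2 * n := (p.1.1).isLt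
lemma colA_lt (p : ColIdx n) : colA p < 2 * n := (p.1.2).isLt
lemma colJ_ne (p : ColIdx n) : colJ p ≠ n := p.2
lemma colB_lt (hn : 7 ≤ n) (p : ColIdx n) : colB p < 2 * n := Nat.mod_lt _ (by omega)
lemma colC_lt (hn : 7 ≤ n) (p : ColIdx n) : colC p < 2 * n := Nat.mod_lt _ (by omega)

lemma col_ext {p q : ColIdx n} (h1 : colJ p = colJ q) (h2 : colA p = colA q) : p = q := by
  apply Subtype.ext
  apply Prod.ext <;> exact Fin.ext ‹_›

lemma xfun_lt (hn : 7 ≤ n) {j : ℕ} (hj : j < 2 * n) : xfun n j < 2 * n := by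
  unfold xfun; split <;> omega

lemma xfun_inj {j j' : ℕ} (hj : j < 2 * n) (hj' : j' < 2 * n)
    (h : xfun n j = xfun n j') : j = j' := by
  unfold xfun at h; split at h <;> split at h <;> omega

lemma zcast_inj (hn : 7 ≤ n) {a b : ℕ} (ha : a < 2 * n) (hb : b < 2 * n)
    (h : (a : ZMod (2 * n)) = b) : a = b := by
  haveI : NeZero (2 * n) := ⟨by omega⟩
  have := congrArg ZMod.val h
  rwa [ZMod.val_cast_of_lt ha, ZMod.val_cast_of_lt hb] at this

lemma Hmat_eq_one_iff (i : Fin (6 * n)) (p : ColIdx n) :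
    Hmat n i p = 1 ↔
      ((i : ℕ) = colA p ∨ (i : ℕ) = colB p + 2 * n ∨ (i : ℕ) = colC p + 4 * n) := by
  unfold Hmat
  have hmem : (i : ℕ) ∈ Blk n (p.1.1 : ℕ) (p.1.2 : ℕ) ↔
      ((i : ℕ) = colA p ∨ (i : ℕ) = colB p + 2 * n ∨ (i : ℕ) = colC p + 4 * n) := by
    simp [Blk, colB, colC, colJ, colA]
  rw [if_congr hmem rfl rfl]
  split_ifs with h <;> simp [h]
end Aux17

namespace Aux17

variable {n : ℕ}

def r0 (hn : 7 ≤ n) (p : ColIdx n) : Fin (6 * n) := ⟨colA p, by have := colA_lt p; omega⟩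
def r1 (hn : 7 ≤ n) (p : ColIdx n) : Fin (6 * n) :=
  ⟨colB p + 2 * n, by have := colB_lt hn p; omega⟩
def r2 (hn : 7 ≤ n) (p : ColIdx n) : Fin (6 * n) :=
  ⟨colC p + 4 * n, by have := colC_lt hn p; omega⟩

lemma r0_ne_r1 (hn : 7 ≤ n) (p q : ColIdx n) : r0 hn p ≠ r1 hn q := by
  have := colA_lt p; simp only [r0, r1, Ne, Fin.mk.injEq]; omega
lemma r0_ne_r2 (hn : 7 ≤ n) (p q : ColIdx n) : r0 hn p ≠ r2 hn q := by
  have := colA_lt p; simp only [r0, r2, Ne, Fin.mk.injEq]; omega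
lemma r1_ne_r2 (hn : 7 ≤ n) (p q : ColIdx n) : r1 hn p ≠ r2 hn q := by
  have := colB_lt hn p; simp only [r1, r2, Ne, Fin.mk.injEq]; omega

lemma filter_col (hn : 7 ≤ n) (p : ColIdx n) :
    (Finset.univ.filter fun i : Fin (6 * n) => Hmat n i p = 1)
      = {r0 hn p, r1 hn p, r2 hn p} := by
  ext i
  simp [Hmat_eq_one_iff, r0, r1, r2, Fin.ext_iff]

lemma card_col (hn : 7 ≤ n) (p : ColIdx n) :
    (Finset.univ.filter fun i : Fin (6 * n) => Hmat n i p = 1).card = 3 := by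
  rw [filter_col hn p, Finset.card_insert_of_notMem, Finset.card_insert_of_notMem,
    Finset.card_singleton]
  · simp [r1_ne_r2 hn p p]
  · simp [r0_ne_r1 hn p p, r0_ne_r2 hn p p]

lemma Hmat_zero_or_one (i : Fin (6 * n)) (p : ColIdx n) :
    Hmat n i p = 0 ∨ Hmat n i p = 1 := by
  unfold Hmat; split <;> simp

lemma col_sum (hn : 7 ≤ n) (p : ColIdx n) (u : Fin (6 * n) → ZMod 2) :
    ∑ i, Hmat n i p * u i = u (r0 hn p) + u (r1 hn p) + u (r2 hn p) := by
  have key : ∀ i, Hmat n i p * u i = if Hmat n i p = 1 then u i else 0 := by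
    intro i
    rcases Hmat_zero_or_one i p with h | h <;> rw [h] <;> simp [h]
  calc ∑ i, Hmat n i p * u i = ∑ i, if Hmat n i p = 1 then u i else 0 :=
        Finset.sum_congr rfl fun i _ => key i
    _ = ∑ i ∈ Finset.univ.filter (fun i : Fin (6 * n) => Hmat n i p = 1), u i :=
        (Finset.sum_filter _ _).symm
    _ = u (r0 hn p) + u (r1 hn p) + u (r2 hn p) := by
        rw [filter_col hn p, Finset.sum_insert, Finset.sum_insert, Finset.sum_singleton]
        · ring
        · simp [r1_ne_r2 hn p p]
        · simp [r0_ne_r1 hn p p, r0_ne_r2 hn p p]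

lemma colB_cast (p : ColIdx n) :
    ((colB p : ℕ) : ZMod (2 * n)) = (colJ p : ZMod (2 * n)) + (colA p : ZMod (2 * n)) := by
  unfold colB; rw [ZMod.natCast_mod]; push_cast; ring

lemma colC_cast (p : ColIdx n) :
    ((colC p : ℕ) : ZMod (2 * n))
      = ((xfun n (colJ p) : ℕ) : ZMod (2 * n)) + (colA p : ZMod (2 * n)) := by
  unfold colC; rw [ZMod.natCast_mod]; push_cast; ring

lemma colB_eq_iff (hn : 7 ≤ n) {p q : ColIdx n} :
    colB p = colB q ↔
      (colJ p : ZMod (2 * n)) + (colA p : ZMod (2 * n))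
        = (colJ q : ZMod (2 * n)) + (colA q : ZMod (2 * n)) := by
  constructor
  · intro h; rw [← colB_cast, ← colB_cast, h]
  · intro h
    exact zcast_inj hn (colB_lt hn p) (colB_lt hn q) (by rw [colB_cast, colB_cast]; exact h)

lemma colC_eq_iff (hn : 7 ≤ n) {p q : ColIdx n} :
    colC p = colC q ↔
      ((xfun n (colJ p) : ℕ) : ZMod (2 * n)) + (colA p : ZMod (2 * n))
        = ((xfun n (colJ q) : ℕ) : ZMod (2 * n)) + (colA q : ZMod (2 * n)) := by
  constructor
  · intro h; rw [← colC_cast, ← colC_cast, h]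
  · intro h
    exact zcast_inj hn (colC_lt hn p) (colC_lt hn q) (by rw [colC_cast, colC_cast]; exact h)

lemma two_n_cast : (2 : ZMod (2 * n)) * (n : ZMod (2 * n)) = 0 := by
  have := ZMod.natCast_self (2 * n)
  push_cast at this
  exact this

lemma xfun_cast (hn : 7 ≤ n) {j : ℕ} (hj : j < 2 * n) :
    ((xfun n j : ℕ) : ZMod (2 * n))
      = 2 * (j : ZMod (2 * n)) + ((if j < n then 1 else 0 : ℕ) : ZMod (2 * n)) := by
  unfold xfun
  split_ifs with h
  · push_cast; ring
  · push_cast [Nat.cast_sub (by omega : n ≤ j)]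
    have := two_n_cast (n := n)
    linear_combination -this

lemma sfun_zinj (hn : 7 ≤ n) {j j' : ℕ} (hj : j < 2 * n) (hj' : j' < 2 * n)
    (h1 : j ≠ n) (h2 : j' ≠ n)
    (h : (j : ZMod (2 * n)) + ((if j < n then 1 else 0 : ℕ) : ZMod (2 * n))
        = (j' : ZMod (2 * n)) + ((if j' < n then 1 else 0 : ℕ) : ZMod (2 * n))) : j = j' := by
  rw [← Nat.cast_add, ← Nat.cast_add] at h
  have := zcast_inj hn (by split_ifs <;> omega) (by split_ifs <;> omega) h
  split_ifs at this <;> omega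

lemma eq_of_A_B (hn : 7 ≤ n) {p q : ColIdx n} (hA : colA p = colA q)
    (hB : colB p = colB q) : p = q := by
  have hB' := (colB_eq_iff hn).mp hB
  have hAc : (colA p : ZMod (2 * n)) = colA q := by rw [hA]
  have : (colJ p : ZMod (2 * n)) = colJ q := by linear_combination hB' - hAc
  exact col_ext (zcast_inj hn (colJ_lt p) (colJ_lt q) this) hA

lemma eq_of_A_C (hn : 7 ≤ n) {p q : ColIdx n} (hA : colA p = colA q)
    (hC : colC p = colC q) : p = q := by
  have hC' := (colC_eq_iff hn).mp hC
  have hAc : (colA p : ZMod (2 * n)) = colA q := by rw [hA]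
  have : ((xfun n (colJ p) : ℕ) : ZMod (2 * n)) = (xfun n (colJ q) : ℕ) := by
    linear_combination hC' - hAc
  have hx := zcast_inj hn (xfun_lt hn (colJ_lt p)) (xfun_lt hn (colJ_lt q)) this
  exact col_ext (xfun_inj (colJ_lt p) (colJ_lt q) hx) hA

lemma eq_of_B_C (hn : 7 ≤ n) {p q : ColIdx n} (hB : colB p = colB q)
    (hC : colC p = colC q) : p = q := by
  have hB' := (colB_eq_iff hn).mp hB
  have hC' := (colC_eq_iff hn).mp hC
  rw [xfun_cast hn (colJ_lt p), xfun_cast hn (colJ_lt q)] at hC'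
  have hs : (colJ p : ZMod (2 * n)) + ((if colJ p < n then 1 else 0 : ℕ) : ZMod (2 * n))
      = (colJ q : ZMod (2 * n)) + ((if colJ q < n then 1 else 0 : ℕ) : ZMod (2 * n)) := by
    linear_combination hC' - hB'
  have hj := sfun_zinj hn (colJ_lt p) (colJ_lt q) (colJ_ne p) (colJ_ne q) hs
  have hjc : (colJ p : ZMod (2 * n)) = colJ q := by rw [hj]
  have : (colA p : ZMod (2 * n)) = colA q := by linear_combination hB' - hjc
  exact col_ext hj (zcast_inj hn (colA_lt p) (colA_lt q) this)

end Aux17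

namespace Aux17

variable {n : ℕ}

lemma jset_card (hn : 7 ≤ n) :
    (Finset.univ.filter fun j : Fin (2 * n) => (j : ℕ) ≠ n).card = 2 * n - 1 := by
  have h1 : (Finset.univ.filter fun j : Fin (2 * n) => (j : ℕ) = n) = {⟨n, by omega⟩} := by
    ext j; simp [Fin.ext_iff]
  have h2 := Finset.card_filter_add_card_filter_not
    (s := (Finset.univ : Finset (Fin (2 * n)))) (p := fun j => (j : ℕ) = n)
  rw [h1] at h2
  simp only [Finset.card_singleton, Finset.card_univ, Fintype.card_fin, ne_eq] at h2 ⊢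
  omega

lemma key_mod (hn : 7 ≤ n) {X r : ℕ} (hX : X < 2 * n) (hr : r < 2 * n) :
    (X + (r + (2 * n - X)) % (2 * n)) % (2 * n) = r := by
  rw [Nat.add_mod_mod, show X + (r + (2 * n - X)) = r + 2 * n by omega,
    Nat.add_mod_right, Nat.mod_eq_of_lt hr]

lemma a_unique (hn : 7 ≤ n) {X a a' r : ℕ} (ha : a < 2 * n) (ha' : a' < 2 * n)
    (h1 : (X + a) % (2 * n) = r) (h2 : (X + a') % (2 * n) = r) : a = a' := by
  have h3 : X + a ≡ X + a' [MOD 2 * n] := by unfold Nat.ModEq; rw [h1, h2]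
  have h4 := Nat.ModEq.add_left_cancel' X h3
  unfold Nat.ModEq at h4
  rwa [Nat.mod_eq_of_lt ha, Nat.mod_eq_of_lt ha'] at h4

lemma row_count_F (hn : 7 ≤ n) (F : ℕ → ℕ) (hF : ∀ j, j < 2 * n → F j < 2 * n)
    (r : ℕ) (hr : r < 2 * n) :
    (Finset.univ.filter fun p : ColIdx n => (F (colJ p) + colA p) % (2 * n) = r).card
      = 2 * n - 1 := by
  rw [← jset_card hn]
  refine Finset.card_bij' (fun p _ => p.1.1)
    (fun j hj => ⟨(j, ⟨(r + (2 * n - F (j : ℕ))) % (2 * n), Nat.mod_lt _ (by omega)⟩),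
      by simpa using hj⟩) ?_ ?_ ?_ ?_
  · intro p hp
    simpa [colJ] using colJ_ne p
  · intro j hj
    simp only [Finset.mem_filter, Finset.mem_univ, true_and]
    exact key_mod hn (hF _ j.isLt) hr
  · intro p hp
    simp only [Finset.mem_filter, Finset.mem_univ, true_and] at hp
    apply Subtype.ext
    apply Prod.ext
    · rfl
    · apply Fin.ext
      exact a_unique hn (Nat.mod_lt _ (by omega)) (colA_lt p)
        (key_mod hn (hF _ (colJ_lt p)) hr) hp
  · intro j hj; rfl

lemma row_count_A (hn : 7 ≤ n) (r : ℕ) (hr : r < 2 * n) :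
    (Finset.univ.filter fun p : ColIdx n => colA p = r).card = 2 * n - 1 := by
  rw [← jset_card hn]
  refine Finset.card_bij' (fun p _ => p.1.1)
    (fun j hj => ⟨(j, ⟨r, hr⟩), by simpa using hj⟩) ?_ ?_ ?_ ?_
  · intro p hp; simpa [colJ] using colJ_ne p
  · intro j hj; exact Finset.mem_filter.mpr ⟨Finset.mem_univ _, rfl⟩
  · intro p hp
    simp only [Finset.mem_filter, Finset.mem_univ, true_and] at hp
    apply Subtype.ext; apply Prod.ext
    · rfl
    · exact Fin.ext hp.symm
  · intro j hj; rfl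

lemma card_row (hn : 7 ≤ n) (i : Fin (6 * n)) :
    (Finset.univ.filter fun p : ColIdx n => Hmat n i p = 1).card = 2 * n - 1 := by
  by_cases h1 : (i : ℕ) < 2 * n
  · rw [show (Finset.univ.filter fun p : ColIdx n => Hmat n i p = 1)
        = Finset.univ.filter fun p : ColIdx n => colA p = (i : ℕ) by
      ext p
      have := colA_lt p; have := colB_lt hn p; have := colC_lt hn p
      simp only [Finset.mem_filter, Finset.mem_univ, true_and, Hmat_eq_one_iff]
      omega]
    exact row_count_A hn _ h1
  · by_cases h2 : (i : ℕ) < 4 * n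
    · rw [show (Finset.univ.filter fun p : ColIdx n => Hmat n i p = 1)
          = Finset.univ.filter fun p : ColIdx n =>
              (id (colJ p) + colA p) % (2 * n) = (i : ℕ) - 2 * n by
        ext p
        have := colA_lt p; have := colB_lt hn p; have := colC_lt hn p
        simp only [Finset.mem_filter, Finset.mem_univ, true_and, Hmat_eq_one_iff, id]
        unfold colB at *
        omega]
      exact row_count_F hn id (fun j hj => hj) _ (by omega)
    · have h3 : (i : ℕ) < 6 * n := i.isLt
      rw [show (Finset.univ.filter fun p : ColIdx n => Hmat n i p = 1)
          = Finset.univ.filter fun p : ColIdx n =>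
              (xfun n (colJ p) + colA p) % (2 * n) = (i : ℕ) - 4 * n by
        ext p
        have := colA_lt p; have := colB_lt hn p; have := colC_lt hn p
        simp only [Finset.mem_filter, Finset.mem_univ, true_and, Hmat_eq_one_iff]
        unfold colC at *
        omega]
      exact row_count_F hn (xfun n) (fun j hj => xfun_lt hn hj) _ (by omega)

end Aux17

namespace Aux17

variable {n : ℕ}

lemma prodZ_ite (i i' : Fin (6 * n)) (p : ColIdx n) :
    HmatZ n i p * HmatZ n i' p
      = if (Hmat n i p = 1 ∧ Hmat n i' p = 1) then 1 else 0 := by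
  unfold HmatZ Hmat
  by_cases hm : (i : ℕ) ∈ Blk n ((p.1.1 : ℕ)) ((p.1.2 : ℕ)) <;>
    by_cases hm' : (i' : ℕ) ∈ Blk n ((p.1.1 : ℕ)) ((p.1.2 : ℕ)) <;>
    simp [hm, hm']

lemma row_inner (hn : 7 ≤ n) (i i' : Fin (6 * n)) (hii : i ≠ i') :
    (∑ p : ColIdx n, HmatZ n i p * HmatZ n i' p) ≤ 1 := by
  have hsum : (∑ p : ColIdx n, HmatZ n i p * HmatZ n i' p)
      = ((Finset.univ.filter fun p : ColIdx n =>
          (Hmat n i p = 1 ∧ Hmat n i' p = 1)).card : ℤ) := by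
    rw [Finset.sum_congr rfl fun p _ => prodZ_ite i i' p]
    exact Finset.sum_boole _ _
  rw [hsum]
  have hcard : (Finset.univ.filter fun p : ColIdx n =>
      (Hmat n i p = 1 ∧ Hmat n i' p = 1)).card ≤ 1 := by
    rw [Finset.card_le_one]
    intro p hp q hq
    simp only [Finset.mem_filter, Finset.mem_univ, true_and] at hp hq
    have hp1 := (Hmat_eq_one_iff i p).mp hp.1
    have hp2 := (Hmat_eq_one_iff i' p).mp hp.2
    have hq1 := (Hmat_eq_one_iff i q).mp hq.1
    have hq2 := (Hmat_eq_one_iff i' q).mp hq.2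
    have := colA_lt p; have := colB_lt hn p; have := colC_lt hn p
    have := colA_lt q; have := colB_lt hn q; have := colC_lt hn q
    rcases hp1 with h | h | h <;> rcases hp2 with h' | h' | h' <;>
      rcases hq1 with g | g | g <;> rcases hq2 with g' | g' | g' <;>
      first
        | omega
        | exact absurd (Fin.ext (by omega)) hii
        | exact eq_of_A_B hn (by omega) (by omega)
        | exact eq_of_A_C hn (by omega) (by omega)
        | exact eq_of_B_C hn (by omega) (by omega)
  exact_mod_cast hcard

lemma col_inner (hn : 7 ≤ n) (p q : ColIdx n) (hpq : p ≠ q) :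
    (∑ i : Fin (6 * n), HmatZ n i p * HmatZ n i q) ≤ 1 := by
  have key : ∀ i : Fin (6 * n), HmatZ n i p * HmatZ n i q
      = if (Hmat n i p = 1 ∧ Hmat n i q = 1) then 1 else 0 := by
    intro i
    unfold HmatZ Hmat
    by_cases hm : (i : ℕ) ∈ Blk n ((p.1.1 : ℕ)) ((p.1.2 : ℕ)) <;>
      by_cases hm' : (i : ℕ) ∈ Blk n ((q.1.1 : ℕ)) ((q.1.2 : ℕ)) <;>
      simp [hm, hm']
  have hsum : (∑ i : Fin (6 * n), HmatZ n i p * HmatZ n i q)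
      = ((Finset.univ.filter fun i : Fin (6 * n) =>
          (Hmat n i p = 1 ∧ Hmat n i q = 1)).card : ℤ) := by
    rw [Finset.sum_congr rfl fun i _ => key i]
    exact Finset.sum_boole _ _
  rw [hsum]
  have hcard : (Finset.univ.filter fun i : Fin (6 * n) =>
      (Hmat n i p = 1 ∧ Hmat n i q = 1)).card ≤ 1 := by
    rw [Finset.card_le_one]
    intro i hi i' hi'
    simp only [Finset.mem_filter, Finset.mem_univ, true_and] at hi hi'
    have hi1 := (Hmat_eq_one_iff i p).mp hi.1
    have hi2 := (Hmat_eq_one_iff i q).mp hi.2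
    have hi'1 := (Hmat_eq_one_iff i' p).mp hi'.1
    have hi'2 := (Hmat_eq_one_iff i' q).mp hi'.2
    have := colA_lt p; have := colB_lt hn p; have := colC_lt hn p
    have := colA_lt q; have := colB_lt hn q; have := colC_lt hn q
    rcases hi1 with h | h | h <;> rcases hi2 with h' | h' | h' <;>
      rcases hi'1 with g | g | g <;> rcases hi'2 with g' | g' | g' <;>
      first
        | omega
        | exact Fin.ext (by omega)
        | exact absurd (eq_of_A_B hn (by omega) (by omega)) hpq
        | exact absurd (eq_of_A_C hn (by omega) (by omega)) hpq
        | exact absurd (eq_of_B_C hn (by omega) (by omega)) hpq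
  exact_mod_cast hcard

end Aux17

namespace Aux17

variable {n : ℕ}

def fF (hn : 7 ≤ n) (u : Fin (6 * n) → ZMod 2) (z : ZMod (2 * n)) : ZMod 2 :=
  u ⟨z.val, by
    haveI : NeZero (2 * n) := ⟨by omega⟩
    have := z.val_lt; omega⟩
def gF (hn : 7 ≤ n) (u : Fin (6 * n) → ZMod 2) (z : ZMod (2 * n)) : ZMod 2 :=
  u ⟨z.val + 2 * n, by
    haveI : NeZero (2 * n) := ⟨by omega⟩
    have := z.val_lt; omega⟩
def hF (hn : 7 ≤ n) (u : Fin (6 * n) → ZMod 2) (z : ZMod (2 * n)) : ZMod 2 :=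
  u ⟨z.val + 4 * n, by
    haveI : NeZero (2 * n) := ⟨by omega⟩
    have := z.val_lt; omega⟩

lemma val_add_cast (hn : 7 ≤ n) (j : ℕ) (a : ZMod (2 * n)) :
    ((j : ZMod (2 * n)) + a).val = (j + a.val) % (2 * n) := by
  haveI : NeZero (2 * n) := ⟨by omega⟩
  have hva : ((a.val : ℕ) : ZMod (2 * n)) = a := by rw [ZMod.natCast_val, ZMod.cast_id]
  conv_lhs => rw [← hva]
  rw [← Nat.cast_add, ZMod.val_natCast]

lemma master (hn : 7 ≤ n) (u : Fin (6 * n) → ZMod 2)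
    (hu : ∀ p : ColIdx n, u (r0 hn p) + u (r1 hn p) + u (r2 hn p) = 0)
    (j : ℕ) (hj : j < 2 * n) (hjn : j ≠ n) (a : ZMod (2 * n)) :
    fF hn u a + gF hn u ((j : ZMod (2 * n)) + a)
      + hF hn u (((xfun n j : ℕ) : ZMod (2 * n)) + a) = 0 := by
  haveI : NeZero (2 * n) := ⟨by omega⟩
  set p : ColIdx n := ⟨(⟨j, hj⟩, ⟨a.val, by have := a.val_lt; omega⟩), by simpa using hjn⟩
    with hp
  have hA : colA p = a.val := rfl
  have hJ : colJ p = j := rfl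
  have e1 : fF hn u a = u (r0 hn p) := rfl
  have e2 : gF hn u ((j : ZMod (2 * n)) + a) = u (r1 hn p) := by
    unfold gF r1
    congr 1
    exact Fin.ext (by simp only [val_add_cast hn j a, colB, hA, hJ])
  have e3 : hF hn u (((xfun n j : ℕ) : ZMod (2 * n)) + a) = u (r2 hn p) := by
    unfold hF r2
    congr 1
    exact Fin.ext (by simp only [val_add_cast hn (xfun n j) a, colC, hA, hJ])
  rw [e1, e2, e3]
  exact hu p

lemma const_of_step (hn : 7 ≤ n) (F : ZMod (2 * n) → ZMod 2)
    (hs : ∀ a, F (a + 1) = F a) : ∀ a, F a = F 0 := by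
  haveI : NeZero (2 * n) := ⟨by omega⟩
  have key : ∀ k : ℕ, F (k : ZMod (2 * n)) = F 0 := by
    intro k
    induction k with
    | zero => norm_num
    | succ m ih => rw [Nat.cast_succ, hs, ih]
  intro a
  have := key a.val
  rwa [ZMod.natCast_val, ZMod.cast_id] at this

lemma iter_two (hn : 7 ≤ n) (F : ZMod (2 * n) → ZMod 2)
    (hp : ∀ a, F (a + 2) = F a) (a : ZMod (2 * n)) (k : ℕ) :
    F (a + 2 * (k : ZMod (2 * n))) = F a := by
  induction k with
  | zero => norm_num
  | succ m ih =>
      rw [show a + 2 * ((m + 1 : ℕ) : ZMod (2 * n))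
          = (a + 2 * (m : ℕ)) + 2 by push_cast; ring, hp, ih]

lemma n_cast_two (hodd : Odd n) : (n : ZMod 2) = 1 := by
  rw [← ZMod.natCast_mod, Nat.odd_iff.mp hodd, Nat.cast_one]

lemma period_from_odd (hn : 7 ≤ n) (hodd : Odd n) (F : ZMod (2 * n) → ZMod 2) (S : ZMod 2)
    (hs : ∀ a, F (a + 2) = F a + S) : S = 0 := by
  have key : ∀ k : ℕ, F (2 * (k : ZMod (2 * n))) = F 0 + (k : ZMod 2) * S := by
    intro k
    induction k with
    | zero => norm_num
    | succ m ih =>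
        rw [show 2 * ((m + 1 : ℕ) : ZMod (2 * n)) = (2 * (m : ℕ)) + 2 by push_cast; ring,
          hs, ih]
        push_cast
        ring
  have hk := key n
  rw [two_n_cast, n_cast_two hodd, one_mul] at hk
  exact (left_eq_add.mp hk)

end Aux17

namespace Aux17

variable {n : ℕ}

lemma dec1 : ∀ x y z w v : ZMod 2, x + y + z = 0 → w + y + v = 0 → x + w + v + z = 0 := by
  decide
lemma dec2 : ∀ x y z w u v : ZMod 2,
    x + y + z + w = 0 → y + u + w + v = 0 → x + u + z + v = 0 := by decide
lemma dec3 : ∀ x y z w s t : ZMod 2,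
    x + y + z + w = 0 → x + y + s + t = 0 → z + w = s + t := by decide
lemma dec4 : ∀ x y t : ZMod 2, x + y = t → y = x + t := by decide
lemma dec5 : ∀ x y z w : ZMod 2, x + y + z + w = 0 → w = z → y = x := by decide
lemma dec6 : ∀ f2 g2 h3 f g h1 : ZMod 2,
    f2 + g2 + h3 = 0 → f2 = f → h3 = h1 → f + g + h1 = 0 → g2 = g := by decide
lemma dec7 : ∀ x y z w : ZMod 2, x + y + z = 0 → x + y + w = 0 → z = w := by decide
lemma dec7' : ∀ x y z w : ZMod 2, x + y + z = 0 → x + w + z = 0 → y = w := by decide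
lemma dec8 : ∀ x y z x0 y0 z0 : ZMod 2,
    x + y + z = 0 → y = y0 → z = z0 → x0 + y0 + z0 = 0 → x = x0 := by decide

lemma left_kernel (hn : 7 ≤ n) (hodd : Odd n) (u : Fin (6 * n) → ZMod 2)
    (hu : ∀ p : ColIdx n, u (r0 hn p) + u (r1 hn p) + u (r2 hn p) = 0) :
    ∃ cf cg ch : ZMod 2, cf + cg + ch = 0 ∧
      ∀ i : Fin (6 * n), u i =
        if (i : ℕ) < 2 * n then cf else if (i : ℕ) < 4 * n then cg else ch := by
  haveI : NeZero (2 * n) := ⟨by omega⟩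
  obtain ⟨m, hm⟩ := hodd
  have h0 : ∀ a : ZMod (2 * n), fF hn u a + gF hn u a + hF hn u (a + 1) = 0 := by
    intro a
    have k := master hn u hu 0 (by omega) (by omega) a
    rw [show ((0 : ℕ) : ZMod (2 * n)) = 0 by norm_num, zero_add,
      show ((xfun n 0 : ℕ) : ZMod (2 * n)) = 1 by
        norm_num [xfun, show (0 : ℕ) < n by omega],
      show (1 : ZMod (2 * n)) + a = a + 1 by ring] at k
    exact k
  have h1 : ∀ a : ZMod (2 * n),
      fF hn u a + gF hn u (a + 1) + hF hn u (a + 3) = 0 := by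
    intro a
    have k := master hn u hu 1 (by omega) (by omega) a
    rw [show ((1 : ℕ) : ZMod (2 * n)) = 1 by norm_num,
      show ((xfun n 1 : ℕ) : ZMod (2 * n)) = 3 by
        norm_num [xfun, show (1 : ℕ) < n by omega],
      show (1 : ZMod (2 * n)) + a = a + 1 by ring,
      show (3 : ZMod (2 * n)) + a = a + 3 by ring] at k
    exact k
  have h2 : ∀ a : ZMod (2 * n),
      fF hn u a + gF hn u (a + 2) + hF hn u (a + 5) = 0 := by
    intro a
    have k := master hn u hu 2 (by omega) (by omega) a
    rw [show ((2 : ℕ) : ZMod (2 * n)) = 2 by norm_num,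
      show ((xfun n 2 : ℕ) : ZMod (2 * n)) = 5 by
        norm_num [xfun, show (2 : ℕ) < n by omega],
      show (2 : ZMod (2 * n)) + a = a + 2 by ring,
      show (5 : ZMod (2 * n)) + a = a + 5 by ring] at k
    exact k
  have hA1 : ∀ a : ZMod (2 * n),
      fF hn u a + fF hn u (a + 1) + hF hn u (a + 2) + hF hn u (a + 3) = 0 := by
    intro a
    have k := h0 (a + 1)
    rw [show a + 1 + 1 = a + 2 by ring] at k
    exact dec1 _ _ _ _ _ (h1 a) k
  have hA2 : ∀ a : ZMod (2 * n),
      fF hn u a + fF hn u (a + 2) + hF hn u (a + 3) + hF hn u (a + 5) = 0 := by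
    intro a
    have k := h0 (a + 2)
    rw [show a + 2 + 1 = a + 3 by ring] at k
    exact dec1 _ _ _ _ _ (h2 a) k
  have hA1' : ∀ a : ZMod (2 * n),
      fF hn u a + fF hn u (a + 2) + hF hn u (a + 2) + hF hn u (a + 4) = 0 := by
    intro a
    have k := hA1 (a + 1)
    rw [show a + 1 + 1 = a + 2 by ring, show a + 1 + 2 = a + 3 by ring,
      show a + 1 + 3 = a + 4 by ring] at k
    exact dec2 _ _ _ _ _ _ (hA1 a) k
  have hHstep : ∀ a : ZMod (2 * n),
      hF hn u (a + 2) + hF hn u (a + 4) = hF hn u (a + 3) + hF hn u (a + 5) :=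
    fun a => dec3 _ _ _ _ _ _ (hA1' a) (hA2 a)
  have hP : ∀ b : ZMod (2 * n),
      hF hn u b + hF hn u (b + 2) = hF hn u (b + 1) + hF hn u (b + 3) := by
    intro b
    have k := hHstep (b - 2)
    rw [show b - 2 + 2 = b by ring, show b - 2 + 3 = b + 1 by ring,
      show b - 2 + 4 = b + 2 by ring, show b - 2 + 5 = b + 3 by ring] at k
    exact k
  have hPconst := const_of_step hn (fun b => hF hn u b + hF hn u (b + 2))
    (fun a => by
      show hF hn u (a + 1) + hF hn u (a + 1 + 2) = hF hn u a + hF hn u (a + 2)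
      rw [show a + 1 + 2 = a + 3 by ring]
      exact (hP a).symm)
  have hT : ∀ b : ZMod (2 * n),
      hF hn u b + hF hn u (b + 2) = hF hn u 0 + hF hn u (0 + 2) := hPconst
  have hT0 : hF hn u 0 + hF hn u (0 + 2) = 0 :=
    period_from_odd hn ⟨m, hm⟩ (hF hn u) _ (fun a => dec4 _ _ _ (hT a))
  have hh2 : ∀ a : ZMod (2 * n), hF hn u (a + 2) = hF hn u a := by
    intro a
    have k := hT a
    rw [hT0] at k
    have := dec4 _ _ _ k
    simpa using this
  have hf2 : ∀ a : ZMod (2 * n), fF hn u (a + 2) = fF hn u a := by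
    intro a
    have k := hh2 (a + 2)
    rw [show a + 2 + 2 = a + 4 by ring] at k
    exact dec5 _ _ _ _ (hA1' a) k
  have hg2 : ∀ a : ZMod (2 * n), gF hn u (a + 2) = gF hn u a := by
    intro a
    have k1 := h0 (a + 2)
    rw [show a + 2 + 1 = a + 3 by ring] at k1
    have k2 := hh2 (a + 1)
    rw [show a + 1 + 2 = a + 3 by ring] at k2
    exact dec6 _ _ _ _ _ _ k1 (hf2 a) k2 (h0 a)
  have giter : ∀ (a : ZMod (2 * n)) (k : ℕ),
      gF hn u (a + 2 * (k : ZMod (2 * n))) = gF hn u a :=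
    iter_two hn (gF hn u) hg2
  have hstar : ∀ a : ZMod (2 * n), fF hn u a + gF hn u a + hF hn u a = 0 := by
    intro a
    have k := master hn u hu (n + 1) (by omega) (by omega) a
    rw [show ((xfun n (n + 1) : ℕ) : ZMod (2 * n)) = 2 by
        rw [show xfun n (n + 1) = 2 by unfold xfun; rw [if_neg (by omega)]; omega]
        norm_num,
      show (2 : ZMod (2 * n)) + a = a + 2 by ring, hh2,
      show ((n + 1 : ℕ) : ZMod (2 * n)) + a = a + 2 * ((m + 1 : ℕ) : ZMod (2 * n)) by
        subst hm; push_cast; ring,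
      giter] at k
    exact k
  have hhc : ∀ a : ZMod (2 * n), hF hn u (a + 1) = hF hn u a :=
    fun a => dec7 _ _ _ _ (h0 a) (hstar a)
  have hconsth : ∀ a : ZMod (2 * n), hF hn u a = hF hn u 0 :=
    const_of_step hn (hF hn u) hhc
  have hgstep : ∀ a : ZMod (2 * n), gF hn u (a + 1) = gF hn u a := by
    intro a
    have k := master hn u hu (n + 2) (by omega) (by omega) a
    rw [show ((xfun n (n + 2) : ℕ) : ZMod (2 * n)) = 4 by
        rw [show xfun n (n + 2) = 4 by unfold xfun; rw [if_neg (by omega)]; omega]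
        norm_num,
      show (4 : ZMod (2 * n)) + a = a + 2 + 2 by ring, hh2, hh2,
      show ((n + 2 : ℕ) : ZMod (2 * n)) + a
          = (a + 1) + 2 * ((m + 1 : ℕ) : ZMod (2 * n)) by
        subst hm; push_cast; ring,
      giter] at k
    exact dec7' _ _ _ _ k (hstar a)
  have hconstg : ∀ a : ZMod (2 * n), gF hn u a = gF hn u 0 :=
    const_of_step hn (gF hn u) hgstep
  have hconstf : ∀ a : ZMod (2 * n), fF hn u a = fF hn u 0 :=
    fun a => dec8 _ _ _ _ _ _ (hstar a) (hconstg a) (hconsth a) (hstar 0)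
  refine ⟨fF hn u 0, gF hn u 0, hF hn u 0, hstar 0, ?_⟩
  intro i
  split_ifs with hi1 hi2
  · have : u i = fF hn u (((i : ℕ) : ZMod (2 * n))) := by
      unfold fF
      congr 1
      exact Fin.ext (ZMod.val_cast_of_lt hi1).symm
    rw [this, hconstf]
  · have : u i = gF hn u ((((i : ℕ) - 2 * n : ℕ) : ZMod (2 * n))) := by
      unfold gF
      congr 1
      refine Fin.ext ?_
      show (i : ℕ) = ((((i : ℕ) - 2 * n : ℕ) : ZMod (2 * n))).val + 2 * n
      have hv := ZMod.val_cast_of_lt (n := 2 * n) (a := (i : ℕ) - 2 * n) (by omega)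
      omega
    rw [this, hconstg]
  · have hi3 := i.isLt
    have : u i = hF hn u ((((i : ℕ) - 4 * n : ℕ) : ZMod (2 * n))) := by
      unfold hF
      congr 1
      refine Fin.ext ?_
      show (i : ℕ) = ((((i : ℕ) - 4 * n : ℕ) : ZMod (2 * n))).val + 4 * n
      have hv := ZMod.val_cast_of_lt (n := 2 * n) (a := (i : ℕ) - 4 * n) (by omega)
      omega
    rw [this, hconsth]

end Aux17

namespace Aux17

variable {n : ℕ}

open Matrix

lemma dec9 : ∀ x y : ZMod 2, x + y + x + y = 0 := by decide

lemma ker_transpose_iff (hn : 7 ≤ n) (u : Fin (6 * n) → ZMod 2) :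
    (Hmat n)ᵀ.mulVec u = 0 ↔
      ∀ p : ColIdx n, u (r0 hn p) + u (r1 hn p) + u (r2 hn p) = 0 := by
  rw [funext_iff]
  apply forall_congr'
  intro p
  have : (Hmat n)ᵀ.mulVec u p = ∑ i, Hmat n i p * u i := by
    simp [Matrix.mulVec, dotProduct, Matrix.transpose_apply]
  rw [this, col_sum hn p u]
  simp

lemma ker_dim (hn : 7 ≤ n) (hodd : Odd n) :
    Module.finrank (ZMod 2) (LinearMap.ker ((Hmat n)ᵀ.mulVecLin)) = 2 := by
  haveI : Fact (Nat.Prime 2) := ⟨by norm_num⟩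
  set K := LinearMap.ker ((Hmat n)ᵀ.mulVecLin) with hK
  have hmemK : ∀ u : Fin (6 * n) → ZMod 2, u ∈ K ↔
      ∀ p : ColIdx n, u (r0 hn p) + u (r1 hn p) + u (r2 hn p) = 0 := by
    intro u
    rw [hK, LinearMap.mem_ker, Matrix.mulVecLin_apply, ker_transpose_iff hn]
  set i1 : Fin (6 * n) := ⟨2 * n, by omega⟩ with hi1
  set i2 : Fin (6 * n) := ⟨4 * n, by omega⟩ with hi2
  set Φ : K →ₗ[ZMod 2] (ZMod 2 × ZMod 2) :=
    LinearMap.prod ((LinearMap.proj i1).comp K.subtype)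
      ((LinearMap.proj i2).comp K.subtype) with hΦ
  have hinj : Function.Injective Φ := by
    rw [← LinearMap.ker_eq_bot]
    apply LinearMap.ker_eq_bot'.mpr
    intro m hm
    obtain ⟨cf, cg, ch, hsum, huniv⟩ := left_kernel hn hodd m.1 ((hmemK m.1).mp m.2)
    have hm1 : m.1 i1 = 0 := congrArg Prod.fst hm
    have hm2 : m.1 i2 = 0 := congrArg Prod.snd hm
    have hcg : cg = 0 := by
      have := huniv i1
      rw [hm1] at this
      simp only [hi1] at this
      rw [if_neg (by omega), if_pos (by omega)] at this
      exact this.symm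
    have hch : ch = 0 := by
      have := huniv i2
      rw [hm2] at this
      simp only [hi2] at this
      rw [if_neg (by omega), if_neg (by omega)] at this
      exact this.symm
    have hcf : cf = 0 := by
      rw [hcg, hch] at hsum
      simpa using hsum
    apply Subtype.ext
    funext i
    have := huniv i
    rw [hcf, hcg, hch] at this
    show m.1 i = 0
    rw [this]
    split_ifs <;> rfl
  have hsurj : Function.Surjective Φ := by
    rintro ⟨c1, c2⟩
    set w : Fin (6 * n) → ZMod 2 :=
      fun i => if (i : ℕ) < 2 * n then c1 + c2 else if (i : ℕ) < 4 * n then c1 else c2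
      with hw
    have hwK : w ∈ K := by
      rw [hmemK]
      intro p
      have e0 : w (r0 hn p) = c1 + c2 := by
        rw [hw]; simp only [r0]
        exact if_pos (show colA p < 2 * n by have := colA_lt p; omega)
      have e1 : w (r1 hn p) = c1 := by
        rw [hw]; simp only [r1]
        exact (if_neg (show ¬ (colB p + 2 * n < 2 * n) by omega)).trans
          (if_pos (show colB p + 2 * n < 4 * n by have := colB_lt hn p; omega))
      have e2 : w (r2 hn p) = c2 := by
        rw [hw]; simp only [r2]
        exact (if_neg (show ¬ (colC p + 4 * n < 2 * n) by omega)).trans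
          (if_neg (show ¬ (colC p + 4 * n < 4 * n) by omega))
      rw [e0, e1, e2]
      exact dec9 c1 c2
    refine ⟨⟨w, hwK⟩, ?_⟩
    have e1 : w i1 = c1 := by
      rw [hw]; simp only [hi1]
      rw [if_neg (by omega), if_pos (by omega)]
    have e2 : w i2 = c2 := by
      rw [hw]; simp only [hi2]
      rw [if_neg (by omega), if_neg (by omega)]
    exact Prod.ext e1 e2
  have e := LinearEquiv.ofBijective Φ ⟨hinj, hsurj⟩
  rw [e.finrank_eq]
  simp

lemma rank_H (hn : 7 ≤ n) (hodd : Odd n) : (Hmat n).rank = 6 * n - 2 := by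
  haveI : Fact (Nat.Prime 2) := ⟨by norm_num⟩
  have h1 : ((Hmat n)ᵀ).rank = (Hmat n).rank := Matrix.rank_transpose _
  have h2 := LinearMap.finrank_range_add_finrank_ker ((Hmat n)ᵀ).mulVecLin
  rw [ker_dim hn hodd] at h2
  have h3 : Module.finrank (ZMod 2) (Fin (6 * n) → ZMod 2) = 6 * n := by
    simp
  rw [h3] at h2
  have h4 : ((Hmat n)ᵀ).rank
      = Module.finrank (ZMod 2) (LinearMap.range ((Hmat n)ᵀ).mulVecLin) := rfl
  omega

lemma card_colIdx (hn : 7 ≤ n) : Fintype.card (ColIdx n) = 4 * n ^ 2 - 2 * n := by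
  have e : {p : Fin (2 * n) × Fin (2 * n) // (p.1 : ℕ) = n} ≃ Fin (2 * n) :=
    { toFun := fun x => x.1.2
      invFun := fun b => ⟨(⟨n, by omega⟩, b), rfl⟩
      left_inv := fun x => Subtype.ext (Prod.ext (Fin.ext x.2.symm) rfl)
      right_inv := fun b => rfl }
  have h1 : Fintype.card {p : Fin (2 * n) × Fin (2 * n) // (p.1 : ℕ) = n} = 2 * n := by
    rw [Fintype.card_congr e, Fintype.card_fin]
  have h2 := Fintype.card_subtype_compl
    (p := fun p : Fin (2 * n) × Fin (2 * n) => (p.1 : ℕ) = n)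
  rw [h1] at h2
  simp only [Fintype.card_prod, Fintype.card_fin] at h2
  have h3 : Fintype.card (ColIdx n)
      = Fintype.card {p : Fin (2 * n) × Fin (2 * n) // ¬ (p.1 : ℕ) = n} := rfl
  rw [h3, h2]
  have h4 : 2 * n * (2 * n) = 4 * n ^ 2 := by ring
  omega

lemma nullity (hn : 7 ≤ n) (hodd : Odd n) :
    Module.finrank (ZMod 2) (LinearMap.ker (Hmat n).mulVecLin)
      = 4 * n ^ 2 - 8 * n + 2 := by
  haveI : Fact (Nat.Prime 2) := ⟨by norm_num⟩
  have h2 := LinearMap.finrank_range_add_finrank_ker (Hmat n).mulVecLin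
  have h3 : Module.finrank (ZMod 2) (ColIdx n → ZMod 2) = 4 * n ^ 2 - 2 * n := by
    rw [Module.finrank_pi (ZMod 2)]
    exact card_colIdx hn
  rw [h3] at h2
  have hr : Module.finrank (ZMod 2) (LinearMap.range (Hmat n).mulVecLin) = 6 * n - 2 :=
    rank_H hn hodd
  rw [hr] at h2
  have hX : 7 * n ≤ n ^ 2 := by
    rw [pow_two]
    exact Nat.mul_le_mul_right n hn
  omega

end Aux17

namespace Aux17

variable {n : ℕ}

open Matrix

lemma double_eq_zero (hn : 7 ≤ n) {z : ZMod (2 * n)} (h : 2 * z = 0) :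
    z = 0 ∨ z = ((n : ℕ) : ZMod (2 * n)) := by
  haveI : NeZero (2 * n) := ⟨by omega⟩
  have hz : ((2 * z.val : ℕ) : ZMod (2 * n)) = 0 := by
    push_cast
    rw [ZMod.natCast_val, ZMod.cast_id]
    exact h
  rw [ZMod.natCast_eq_zero_iff] at hz
  obtain ⟨k, hk⟩ := hz
  have hlt := z.val_lt
  have hzv : z = ((z.val : ℕ) : ZMod (2 * n)) := by
    rw [ZMod.natCast_val, ZMod.cast_id]
  match k with
  | 0 => left; rw [hzv, show z.val = 0 by omega]; norm_num
  | 1 => right; rw [hzv, show z.val = n by omega]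
  | (k + 2) =>
      exfalso
      have h5 : 2 * n * (k + 2) = 4 * n + 2 * n * k := by ring
      omega

lemma offset_n (hn : 7 ≤ n) {x y : ℕ} (hx : x < 2 * n) (hy : y < 2 * n)
    (h : (x : ZMod (2 * n)) = (y : ZMod (2 * n)) + ((n : ℕ) : ZMod (2 * n))) :
    x + n = y ∨ x = y + n := by
  by_cases hcase : y + n < 2 * n
  · right
    have h2 : (x : ZMod (2 * n)) = ((y + n : ℕ) : ZMod (2 * n)) := by push_cast; exact h
    exact zcast_inj hn hx hcase h2
  · left
    have h2 : (x : ZMod (2 * n)) = ((y + n - 2 * n : ℕ) : ZMod (2 * n)) := by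
      rw [show ((y + n - 2 * n : ℕ) : ZMod (2 * n)) = (((y + n) % (2 * n) : ℕ) : ZMod (2 * n)) by
          rw [Nat.mod_eq_sub_mod (by omega), Nat.mod_eq_of_lt (by omega)],
        ZMod.natCast_mod]
      push_cast
      exact h
    have := zcast_inj hn hx (by omega) h2
    omega

lemma caseB (hn : 7 ≤ n) (hodd : Odd n) {j1 j2 j3 j4 a1 a3 : ℕ}
    (hj1 : j1 < 2 * n) (hj2 : j2 < 2 * n) (hj3 : j3 < 2 * n) (hj4 : j4 < 2 * n)
    (hn1 : j1 ≠ n) (hn2 : j2 ≠ n) (hn3 : j3 ≠ n) (hn4 : j4 ≠ n)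
    (hj34 : j3 ≠ j4)
    (ha1 : a1 < 2 * n) (ha3 : a3 < 2 * n)
    (hane : a1 ≠ a3)
    (e1 : (j1 : ZMod (2 * n)) + a1 = j3 + a3)
    (e2 : (j2 : ZMod (2 * n)) + a1 = j4 + a3)
    (e3 : ((xfun n j1 : ℕ) : ZMod (2 * n)) + a1 = ((xfun n j4 : ℕ) : ZMod (2 * n)) + a3)
    (e4 : ((xfun n j2 : ℕ) : ZMod (2 * n)) + a1 = ((xfun n j3 : ℕ) : ZMod (2 * n)) + a3) :
    False := by
  haveI : NeZero (2 * n) := ⟨by omega⟩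
  rw [xfun_cast hn hj1, xfun_cast hn hj4] at e3
  rw [xfun_cast hn hj2, xfun_cast hn hj3] at e4
  have hI : 2 * ((j3 : ZMod (2 * n)) - j4)
      = ((if j4 < n then 1 else 0 : ℕ) : ZMod (2 * n))
        - ((if j1 < n then 1 else 0 : ℕ) : ZMod (2 * n))
        - ((a3 : ZMod (2 * n)) - a1) := by linear_combination e3 - 2 * e1
  have hII : 2 * ((j4 : ZMod (2 * n)) - j3)
      = ((if j3 < n then 1 else 0 : ℕ) : ZMod (2 * n))
        - ((if j2 < n then 1 else 0 : ℕ) : ZMod (2 * n))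
        - ((a3 : ZMod (2 * n)) - a1) := by linear_combination e4 - 2 * e2
  have hsum : 2 * ((a3 : ZMod (2 * n)) - a1)
      = ((if j3 < n then 1 else 0 : ℕ) : ZMod (2 * n))
        + ((if j4 < n then 1 else 0 : ℕ) : ZMod (2 * n))
        - ((if j1 < n then 1 else 0 : ℕ) : ZMod (2 * n))
        - ((if j2 < n then 1 else 0 : ℕ) : ZMod (2 * n)) := by
    linear_combination hI + hII
  set φ := (ZMod.castHom (show (2 : ℕ) ∣ 2 * n from ⟨n, rfl⟩) (ZMod 2)) with hφdef
  have hφI := congrArg φ hI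
  have hφII := congrArg φ hII
  simp only [_root_.map_mul, map_sub, map_natCast, map_ofNat] at hφI hφII
  rw [show ((2 : ZMod 2)) = 0 by decide, zero_mul] at hφI hφII
  by_cases hb1 : j1 < n <;> by_cases hb2 : j2 < n <;> by_cases hb3 : j3 < n <;>
    by_cases hb4 : j4 < n
  · -- bits (1, 1, 1, 1)
    simp only [if_pos hb1, if_pos hb2, if_pos hb3, if_pos hb4, Nat.cast_one, Nat.cast_zero] at hI hφI hφII hsum
    have hk : 2 * ((a3 : ZMod (2 * n)) - a1) = 0 := by linear_combination hsum
    rcases double_eq_zero hn hk with h | h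
    · exact hane (zcast_inj hn ha1 ha3 (by linear_combination -h))
    · have t := congrArg φ h
      simp only [map_sub, map_natCast] at t
      rw [n_cast_two hodd] at t
      exact absurd (show (0 : ZMod 2) = 1 by linear_combination t - hφI) (by decide)
  · -- bits (1, 1, 1, 0)
    simp only [if_pos hb1, if_pos hb2, if_pos hb3, if_neg hb4, Nat.cast_one, Nat.cast_zero] at hI hφI hφII hsum
    exact absurd (show (0 : ZMod 2) = 1 by linear_combination hφII - hφI) (by decide)
  · -- bits (1, 1, 0, 1)
    simp only [if_pos hb1, if_pos hb2, if_neg hb3, if_pos hb4, Nat.cast_one, Nat.cast_zero] at hI hφI hφII hsum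
    exact absurd (show (0 : ZMod 2) = 1 by linear_combination hφI - hφII) (by decide)
  · -- bits (1, 1, 0, 0)
    simp only [if_pos hb1, if_pos hb2, if_neg hb3, if_neg hb4, Nat.cast_one, Nat.cast_zero] at hI hφI hφII hsum
    have hk : 2 * (((a3 : ZMod (2 * n)) - a1) + 1) = 0 := by linear_combination hsum
    rcases double_eq_zero hn hk with h | h
    · have h34 : 2 * ((j3 : ZMod (2 * n)) - j4) = 0 := by linear_combination hI - h
      rcases double_eq_zero hn h34 with h2 | h2
      · exact hj34 (zcast_inj hn hj3 hj4 (by linear_combination h2))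
      · have h3 : (j3 : ZMod (2 * n)) = (j4 : ZMod (2 * n)) + ((n : ℕ) : ZMod (2 * n)) := by
          linear_combination h2
        rcases offset_n hn hj3 hj4 h3 with h4 | h4 <;> omega
    · have t := congrArg φ h
      simp only [_root_.map_add, map_sub, _root_.map_one, map_natCast] at t
      rw [n_cast_two hodd] at t
      exact absurd (show (0 : ZMod 2) = 1 by linear_combination t - hφI) (by decide)
  · -- bits (1, 0, 1, 1)
    simp only [if_pos hb1, if_neg hb2, if_pos hb3, if_pos hb4, Nat.cast_one, Nat.cast_zero] at hI hφI hφII hsum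
    exact absurd (show (0 : ZMod 2) = 1 by linear_combination hφII - hφI) (by decide)
  · -- bits (1, 0, 1, 0)
    simp only [if_pos hb1, if_neg hb2, if_pos hb3, if_neg hb4, Nat.cast_one, Nat.cast_zero] at hI hφI hφII hsum
    have hk : 2 * ((a3 : ZMod (2 * n)) - a1) = 0 := by linear_combination hsum
    rcases double_eq_zero hn hk with h | h
    · exact hane (zcast_inj hn ha1 ha3 (by linear_combination -h))
    · have he1 : (j1 : ZMod (2 * n)) = (j3 : ZMod (2 * n)) + ((n : ℕ) : ZMod (2 * n)) := by
        linear_combination e1 + h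
      rcases offset_n hn hj1 hj3 he1 with h4 | h4 <;> omega
  · -- bits (1, 0, 0, 1)
    simp only [if_pos hb1, if_neg hb2, if_neg hb3, if_pos hb4, Nat.cast_one, Nat.cast_zero] at hI hφI hφII hsum
    have hk : 2 * ((a3 : ZMod (2 * n)) - a1) = 0 := by linear_combination hsum
    rcases double_eq_zero hn hk with h | h
    · exact hane (zcast_inj hn ha1 ha3 (by linear_combination -h))
    · have t := congrArg φ h
      simp only [map_sub, map_natCast] at t
      rw [n_cast_two hodd] at t
      exact absurd (show (0 : ZMod 2) = 1 by linear_combination t - hφI) (by decide)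
  · -- bits (1, 0, 0, 0)
    simp only [if_pos hb1, if_neg hb2, if_neg hb3, if_neg hb4, Nat.cast_one, Nat.cast_zero] at hI hφI hφII hsum
    exact absurd (show (0 : ZMod 2) = 1 by linear_combination hφII - hφI) (by decide)
  · -- bits (0, 1, 1, 1)
    simp only [if_neg hb1, if_pos hb2, if_pos hb3, if_pos hb4, Nat.cast_one, Nat.cast_zero] at hI hφI hφII hsum
    exact absurd (show (0 : ZMod 2) = 1 by linear_combination hφI - hφII) (by decide)
  · -- bits (0, 1, 1, 0)
    simp only [if_neg hb1, if_pos hb2, if_pos hb3, if_neg hb4, Nat.cast_one, Nat.cast_zero] at hI hφI hφII hsum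
    have hk : 2 * ((a3 : ZMod (2 * n)) - a1) = 0 := by linear_combination hsum
    rcases double_eq_zero hn hk with h | h
    · exact hane (zcast_inj hn ha1 ha3 (by linear_combination -h))
    · have t := congrArg φ h
      simp only [map_sub, map_natCast] at t
      rw [n_cast_two hodd] at t
      exact absurd (show (0 : ZMod 2) = 1 by linear_combination t - hφI) (by decide)
  · -- bits (0, 1, 0, 1)
    simp only [if_neg hb1, if_pos hb2, if_neg hb3, if_pos hb4, Nat.cast_one, Nat.cast_zero] at hI hφI hφII hsum
    have hk : 2 * ((a3 : ZMod (2 * n)) - a1) = 0 := by linear_combination hsum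
    rcases double_eq_zero hn hk with h | h
    · exact hane (zcast_inj hn ha1 ha3 (by linear_combination -h))
    · have he1 : (j1 : ZMod (2 * n)) = (j3 : ZMod (2 * n)) + ((n : ℕ) : ZMod (2 * n)) := by
        linear_combination e1 + h
      rcases offset_n hn hj1 hj3 he1 with h4 | h4 <;> omega
  · -- bits (0, 1, 0, 0)
    simp only [if_neg hb1, if_pos hb2, if_neg hb3, if_neg hb4, Nat.cast_one, Nat.cast_zero] at hI hφI hφII hsum
    exact absurd (show (0 : ZMod 2) = 1 by linear_combination hφI - hφII) (by decide)
  · -- bits (0, 0, 1, 1)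
    simp only [if_neg hb1, if_neg hb2, if_pos hb3, if_pos hb4, Nat.cast_one, Nat.cast_zero] at hI hφI hφII hsum
    have hk : 2 * (((a3 : ZMod (2 * n)) - a1) - 1) = 0 := by linear_combination hsum
    rcases double_eq_zero hn hk with h | h
    · have h34 : 2 * ((j3 : ZMod (2 * n)) - j4) = 0 := by linear_combination hI - h
      rcases double_eq_zero hn h34 with h2 | h2
      · exact hj34 (zcast_inj hn hj3 hj4 (by linear_combination h2))
      · have h3 : (j3 : ZMod (2 * n)) = (j4 : ZMod (2 * n)) + ((n : ℕ) : ZMod (2 * n)) := by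
          linear_combination h2
        rcases offset_n hn hj3 hj4 h3 with h4 | h4 <;> omega
    · have t := congrArg φ h
      simp only [map_sub, _root_.map_one, map_natCast] at t
      rw [n_cast_two hodd] at t
      exact absurd (show (0 : ZMod 2) = 1 by linear_combination t - hφI) (by decide)
  · -- bits (0, 0, 1, 0)
    simp only [if_neg hb1, if_neg hb2, if_pos hb3, if_neg hb4, Nat.cast_one, Nat.cast_zero] at hI hφI hφII hsum
    exact absurd (show (0 : ZMod 2) = 1 by linear_combination hφII - hφI) (by decide)
  · -- bits (0, 0, 0, 1)
    simp only [if_neg hb1, if_neg hb2, if_neg hb3, if_pos hb4, Nat.cast_one, Nat.cast_zero] at hI hφI hφII hsum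
    exact absurd (show (0 : ZMod 2) = 1 by linear_combination hφI - hφII) (by decide)
  · -- bits (0, 0, 0, 0)
    simp only [if_neg hb1, if_neg hb2, if_neg hb3, if_neg hb4, Nat.cast_one, Nat.cast_zero] at hI hφI hφII hsum
    have hk : 2 * ((a3 : ZMod (2 * n)) - a1) = 0 := by linear_combination hsum
    rcases double_eq_zero hn hk with h | h
    · exact hane (zcast_inj hn ha1 ha3 (by linear_combination -h))
    · have t := congrArg φ h
      simp only [map_sub, map_natCast] at t
      rw [n_cast_two hodd] at t
      exact absurd (show (0 : ZMod 2) = 1 by linear_combination t - hφI) (by decide)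

end Aux17

namespace Aux17

variable {n : ℕ}

lemma zmod2_cases : ∀ x : ZMod 2, x = 0 ∨ x = 1 := by decide

lemma r0_val (hn : 7 ≤ n) (p : ColIdx n) : ((r0 hn p) : ℕ) = colA p := rfl
lemma r1_val (hn : 7 ≤ n) (p : ColIdx n) : ((r1 hn p) : ℕ) = colB p + 2 * n := rfl
lemma r2_val (hn : 7 ≤ n) (p : ColIdx n) : ((r2 hn p) : ℕ) = colC p + 4 * n := rfl

lemma H_at_r0 (hn : 7 ≤ n) (p q : ColIdx n) :
    Hmat n (r0 hn p) q = if colA q = colA p then 1 else 0 := by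
  have ha := colA_lt p; have ha' := colA_lt q
  have hb := colB_lt hn q; have hc := colC_lt hn q
  split_ifs with hc1
  · exact (Hmat_eq_one_iff _ _).mpr (by rw [r0_val]; omega)
  · rcases Hmat_zero_or_one (r0 hn p) q with h | h
    · exact h
    · exfalso
      have h2 := (Hmat_eq_one_iff _ _).mp h
      rw [r0_val] at h2
      omega

lemma H_at_r1 (hn : 7 ≤ n) (p q : ColIdx n) :
    Hmat n (r1 hn p) q = if colB q = colB p then 1 else 0 := by
  have ha := colA_lt q; have hb' := colB_lt hn p
  have hb := colB_lt hn q; have hc := colC_lt hn q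
  split_ifs with hc1
  · exact (Hmat_eq_one_iff _ _).mpr (by rw [r1_val]; omega)
  · rcases Hmat_zero_or_one (r1 hn p) q with h | h
    · exact h
    · exfalso
      have h2 := (Hmat_eq_one_iff _ _).mp h
      rw [r1_val] at h2
      omega

lemma H_at_r2 (hn : 7 ≤ n) (p q : ColIdx n) :
    Hmat n (r2 hn p) q = if colC q = colC p then 1 else 0 := by
  have ha := colA_lt q; have hb' := colC_lt hn p
  have hb := colB_lt hn q; have hc := colC_lt hn q
  split_ifs with hc1
  · exact (Hmat_eq_one_iff _ _).mpr (by rw [r2_val]; omega)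
  · rcases Hmat_zero_or_one (r2 hn p) q with h | h
    · exact h
    · exfalso
      have h2 := (Hmat_eq_one_iff _ _).mp h
      rw [r2_val] at h2
      omega

lemma parity3 {P Q R : Prop} [Decidable P] [Decidable Q] [Decidable R]
    (h : 1 + (if P then (1 : ZMod 2) else 0) + (if Q then (1 : ZMod 2) else 0)
      + (if R then (1 : ZMod 2) else 0) = 0) :
    (P ∧ Q ∧ R) ∨ (P ∧ ¬Q ∧ ¬R) ∨ (¬P ∧ Q ∧ ¬R) ∨ (¬P ∧ ¬Q ∧ R) := by
  by_cases hP : P <;> by_cases hQ : Q <;> by_cases hR : R <;>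
    simp only [hP, hQ, hR, if_true, if_false] at h ⊢ <;>
    first
      | tauto
      | exact absurd h (by decide)

lemma gammaCase (hn : 7 ≤ n) (hodd : Odd n) (q1 q2 q3 q4 : ColIdx n)
    (h12 : q1 ≠ q2) (h34 : q3 ≠ q4) (h13 : q1 ≠ q3)
    (ha12 : colA q1 = colA q2) (ha34 : colA q3 = colA q4) (ha13 : colA q1 ≠ colA q3)
    (hB13 : colB q3 = colB q1) (hB24 : colB q4 = colB q2)
    (hrow : ∀ i : Fin (6 * n),
      Hmat n i q1 + Hmat n i q2 + Hmat n i q3 + Hmat n i q4 = 0) : False := by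
  have hg12 : colC q2 ≠ colC q1 := fun h => h12 (eq_of_A_C hn ha12 h.symm)
  have hp := hrow (r2 hn q1)
  rw [H_at_r2 hn q1 q1, H_at_r2 hn q1 q2, H_at_r2 hn q1 q3, H_at_r2 hn q1 q4,
    if_pos rfl] at hp
  have hc2 : ((colA q2 : ℕ) : ZMod (2 * n)) = ((colA q1 : ℕ) : ZMod (2 * n)) := by
    rw [ha12]
  have hc4 : ((colA q4 : ℕ) : ZMod (2 * n)) = ((colA q3 : ℕ) : ZMod (2 * n)) := by
    rw [ha34]
  have main : colC q4 = colC q1 → colC q3 = colC q2 → False := by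
    intro h4 h3
    have e1 : ((colJ q1 : ℕ) : ZMod (2 * n)) + (colA q1 : ZMod (2 * n))
        = (colJ q3 : ZMod (2 * n)) + (colA q3 : ZMod (2 * n)) :=
      ((colB_eq_iff hn).mp hB13).symm
    have e2 : ((colJ q2 : ℕ) : ZMod (2 * n)) + (colA q1 : ZMod (2 * n))
        = (colJ q4 : ZMod (2 * n)) + (colA q3 : ZMod (2 * n)) := by
      linear_combination - ((colB_eq_iff hn).mp hB24) - hc2 + hc4
    have e3 : ((xfun n (colJ q1) : ℕ) : ZMod (2 * n)) + (colA q1 : ZMod (2 * n))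
        = ((xfun n (colJ q4) : ℕ) : ZMod (2 * n)) + (colA q3 : ZMod (2 * n)) := by
      linear_combination - ((colC_eq_iff hn).mp h4) + hc4
    have e4 : ((xfun n (colJ q2) : ℕ) : ZMod (2 * n)) + (colA q1 : ZMod (2 * n))
        = ((xfun n (colJ q3) : ℕ) : ZMod (2 * n)) + (colA q3 : ZMod (2 * n)) := by
      linear_combination - ((colC_eq_iff hn).mp h3) - hc2
    exact caseB hn hodd (colJ_lt q1) (colJ_lt q2) (colJ_lt q3) (colJ_lt q4)
      (colJ_ne q1) (colJ_ne q2) (colJ_ne q3) (colJ_ne q4)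
      (fun h => h34 (col_ext h ha34))
      (colA_lt q1) (colA_lt q3) ha13 e1 e2 e3 e4
  rcases parity3 hp with ⟨h2, _, _⟩ | ⟨h2, _, _⟩ | ⟨_, h3, _⟩ | ⟨_, _, h4⟩
  · exact hg12 h2
  · exact hg12 h2
  · exact h13 (eq_of_B_C hn hB13 h3).symm
  · have hp2 := hrow (r2 hn q2)
    rw [H_at_r2 hn q2 q1, H_at_r2 hn q2 q2, H_at_r2 hn q2 q3, H_at_r2 hn q2 q4,
      if_pos rfl] at hp2
    have hp2' : 1 + (if colC q1 = colC q2 then (1 : ZMod 2) else 0)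
        + (if colC q3 = colC q2 then (1 : ZMod 2) else 0)
        + (if colC q4 = colC q2 then (1 : ZMod 2) else 0) = 0 := by
      linear_combination hp2
    rcases parity3 hp2' with ⟨g1, _, _⟩ | ⟨g1, _, _⟩ | ⟨_, g3, _⟩ | ⟨_, _, g4⟩
    · exact hg12 g1.symm
    · exact hg12 g1.symm
    · exact main h4 g3
    · exact hg12 (g4.symm.trans h4)

lemma pairedCase (hn : 7 ≤ n) (hodd : Odd n) (q1 q2 q3 q4 : ColIdx n)
    (h12 : q1 ≠ q2) (h34 : q3 ≠ q4) (h13 : q1 ≠ q3) (h14 : q1 ≠ q4)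
    (ha12 : colA q1 = colA q2) (ha34 : colA q3 = colA q4) (ha13 : colA q1 ≠ colA q3)
    (hrow : ∀ i : Fin (6 * n),
      Hmat n i q1 + Hmat n i q2 + Hmat n i q3 + Hmat n i q4 = 0) : False := by
  have hb12 : colB q2 ≠ colB q1 := fun h => h12 (eq_of_A_B hn ha12 h.symm)
  have hp := hrow (r1 hn q1)
  rw [H_at_r1 hn q1 q1, H_at_r1 hn q1 q2, H_at_r1 hn q1 q3, H_at_r1 hn q1 q4,
    if_pos rfl] at hp
  rcases parity3 hp with ⟨h2, _, _⟩ | ⟨h2, _, _⟩ | ⟨_, h3, _⟩ | ⟨_, _, h4⟩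
  · exact hb12 h2
  · exact hb12 h2
  · -- colB q3 = colB q1; derive colB q4 = colB q2
    have hp2 := hrow (r1 hn q2)
    rw [H_at_r1 hn q2 q1, H_at_r1 hn q2 q2, H_at_r1 hn q2 q3, H_at_r1 hn q2 q4,
      if_pos rfl] at hp2
    have hp2' : 1 + (if colB q1 = colB q2 then (1 : ZMod 2) else 0)
        + (if colB q3 = colB q2 then (1 : ZMod 2) else 0)
        + (if colB q4 = colB q2 then (1 : ZMod 2) else 0) = 0 := by
      linear_combination hp2
    rcases parity3 hp2' with ⟨g1, _, _⟩ | ⟨g1, _, _⟩ | ⟨_, g3, _⟩ | ⟨_, _, g4⟩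
    · exact hb12 g1.symm
    · exact hb12 g1.symm
    · exact hb12 (g3.symm.trans h3)
    · exact gammaCase hn hodd q1 q2 q3 q4 h12 h34 h13 ha12 ha34 ha13 h3 g4 hrow
  · -- colB q4 = colB q1; derive colB q3 = colB q2
    have hp2 := hrow (r1 hn q2)
    rw [H_at_r1 hn q2 q1, H_at_r1 hn q2 q2, H_at_r1 hn q2 q3, H_at_r1 hn q2 q4,
      if_pos rfl] at hp2
    have hp2' : 1 + (if colB q1 = colB q2 then (1 : ZMod 2) else 0)
        + (if colB q3 = colB q2 then (1 : ZMod 2) else 0)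
        + (if colB q4 = colB q2 then (1 : ZMod 2) else 0) = 0 := by
      linear_combination hp2
    rcases parity3 hp2' with ⟨g1, _, _⟩ | ⟨g1, _, _⟩ | ⟨_, g3, _⟩ | ⟨_, _, g4⟩
    · exact hb12 g1.symm
    · exact hb12 g1.symm
    · exact gammaCase hn hodd q1 q2 q4 q3 h12 h34.symm h14 ha12 ha34.symm
        (fun h => ha13 (h.trans ha34.symm)) h4 g3
        (fun i => by linear_combination hrow i)
    · exact hb12 (g4.symm.trans h4)

lemma allA (hn : 7 ≤ n) (q1 q2 q3 q4 : ColIdx n)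
    (h12 : q1 ≠ q2) (h13 : q1 ≠ q3) (h14 : q1 ≠ q4)
    (ha2 : colA q2 = colA q1) (ha3 : colA q3 = colA q1) (ha4 : colA q4 = colA q1)
    (hrow : ∀ i : Fin (6 * n),
      Hmat n i q1 + Hmat n i q2 + Hmat n i q3 + Hmat n i q4 = 0) : False := by
  have hp := hrow (r1 hn q1)
  rw [H_at_r1 hn q1 q1, H_at_r1 hn q1 q2, H_at_r1 hn q1 q3, H_at_r1 hn q1 q4,
    if_pos rfl] at hp
  rcases parity3 hp with ⟨h2, _, _⟩ | ⟨h2, _, _⟩ | ⟨_, h3, _⟩ | ⟨_, _, h4⟩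
  · exact h12 (eq_of_A_B hn ha2.symm h2.symm)
  · exact h12 (eq_of_A_B hn ha2.symm h2.symm)
  · exact h13 (eq_of_A_B hn ha3.symm h3.symm)
  · exact h14 (eq_of_A_B hn ha4.symm h4.symm)

lemma weight4 (hn : 7 ≤ n) (hodd : Odd n) (p1 p2 p3 p4 : ColIdx n)
    (h12 : p1 ≠ p2) (h13 : p1 ≠ p3) (h14 : p1 ≠ p4)
    (h23 : p2 ≠ p3) (h24 : p2 ≠ p4) (h34 : p3 ≠ p4)
    (hrow : ∀ i : Fin (6 * n),
      Hmat n i p1 + Hmat n i p2 + Hmat n i p3 + Hmat n i p4 = 0) : False := by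
  have hp := hrow (r0 hn p1)
  rw [H_at_r0 hn p1 p1, H_at_r0 hn p1 p2, H_at_r0 hn p1 p3, H_at_r0 hn p1 p4,
    if_pos rfl] at hp
  rcases parity3 hp with ⟨h2, h3, h4⟩ | ⟨h2, h3, h4⟩ | ⟨h2, h3, h4⟩ | ⟨h2, h3, h4⟩
  · exact allA hn p1 p2 p3 p4 h12 h13 h14 h2 h3 h4 hrow
  · -- colA p2 = colA p1; derive colA p4 = colA p3
    have hp3 := hrow (r0 hn p3)
    rw [H_at_r0 hn p3 p1, H_at_r0 hn p3 p2, H_at_r0 hn p3 p3, H_at_r0 hn p3 p4,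
      if_pos rfl] at hp3
    have hp3' : 1 + (if colA p1 = colA p3 then (1 : ZMod 2) else 0)
        + (if colA p2 = colA p3 then (1 : ZMod 2) else 0)
        + (if colA p4 = colA p3 then (1 : ZMod 2) else 0) = 0 := by
      linear_combination hp3
    rcases parity3 hp3' with ⟨g1, _, _⟩ | ⟨g1, _, _⟩ | ⟨_, g2, _⟩ | ⟨_, _, g4⟩
    · exact h3 g1.symm
    · exact h3 g1.symm
    · exact h3 (g2.symm.trans h2)
    · exact pairedCase hn hodd p1 p2 p3 p4 h12 h34 h13 h14 h2.symm g4.symm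
        (fun h => h3 h.symm) hrow
  · -- colA p3 = colA p1; derive colA p4 = colA p2
    have hp2 := hrow (r0 hn p2)
    rw [H_at_r0 hn p2 p1, H_at_r0 hn p2 p2, H_at_r0 hn p2 p3, H_at_r0 hn p2 p4,
      if_pos rfl] at hp2
    have hp2' : 1 + (if colA p1 = colA p2 then (1 : ZMod 2) else 0)
        + (if colA p3 = colA p2 then (1 : ZMod 2) else 0)
        + (if colA p4 = colA p2 then (1 : ZMod 2) else 0) = 0 := by
      linear_combination hp2
    rcases parity3 hp2' with ⟨g1, _, _⟩ | ⟨g1, _, _⟩ | ⟨_, g3, _⟩ | ⟨_, _, g4⟩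
    · exact h2 g1.symm
    · exact h2 g1.symm
    · exact h2 (g3.symm.trans h3)
    · exact pairedCase hn hodd p1 p3 p2 p4 h13 h24 h12 h14 h3.symm g4.symm
        (fun h => h2 h.symm)
        (fun i => by linear_combination hrow i)
  · -- colA p4 = colA p1; derive colA p3 = colA p2
    have hp2 := hrow (r0 hn p2)
    rw [H_at_r0 hn p2 p1, H_at_r0 hn p2 p2, H_at_r0 hn p2 p3, H_at_r0 hn p2 p4,
      if_pos rfl] at hp2
    have hp2' : 1 + (if colA p1 = colA p2 then (1 : ZMod 2) else 0)
        + (if colA p3 = colA p2 then (1 : ZMod 2) else 0)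
        + (if colA p4 = colA p2 then (1 : ZMod 2) else 0) = 0 := by
      linear_combination hp2
    rcases parity3 hp2' with ⟨g1, _, _⟩ | ⟨g1, _, _⟩ | ⟨_, g3, _⟩ | ⟨_, _, g4⟩
    · exact h2 g1.symm
    · exact h2 g1.symm
    · exact pairedCase hn hodd p1 p4 p2 p3 h14 h23 h12 h13 h4.symm g3.symm
        (fun h => h2 h.symm)
        (fun i => by linear_combination hrow i)
    · exact h2 (g4.symm.trans h4)

end Aux17

namespace Aux17

variable {n : ℕ}

lemma min_weight (hn : 7 ≤ n) (hodd : Odd n) (v : ColIdx n → ZMod 2) (hv0 : v ≠ 0)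
    (hker : (Hmat n).mulVec v = 0) :
    6 ≤ (Finset.univ.filter fun p : ColIdx n => v p ≠ 0).card := by
  haveI : NeZero (2 * n) := ⟨by omega⟩
  set S := Finset.univ.filter (fun p : ColIdx n => v p ≠ 0) with hS
  by_contra hlt
  push_neg at hlt
  have hv1 : ∀ p ∈ S, v p = 1 := by
    intro p hp
    rw [hS, Finset.mem_filter] at hp
    rcases zmod2_cases (v p) with h | h
    · exact absurd h hp.2
    · exact h
  have hrowS : ∀ i, ∑ p ∈ S, Hmat n i p = 0 := by
    intro i
    have h1 : ∑ p, Hmat n i p * v p = 0 := by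
      have := congrFun hker i
      rwa [show (Hmat n).mulVec v i = ∑ p, Hmat n i p * v p from rfl,
        show (0 : Fin (6 * n) → ZMod 2) i = 0 from rfl] at this
    rw [← Finset.sum_filter_of_ne (p := fun p : ColIdx n => v p ≠ 0)
      (fun p _ hne => by
        intro hvp
        exact hne (by rw [hvp, mul_zero]))] at h1
    rw [← h1]
    apply Finset.sum_congr rfl
    intro p hp
    rw [hv1 p hp, mul_one]
  have hpar : (S.card : ZMod 2) = 0 := by
    have h2 : ∑ p ∈ S, (∑ i, Hmat n i p) = 0 := by
      rw [Finset.sum_comm]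
      exact Finset.sum_eq_zero fun i _ => hrowS i
    have h3 : ∀ p : ColIdx n, (∑ i, Hmat n i p) = 1 := by
      intro p
      have h4 := col_sum hn p (fun _ => (1 : ZMod 2))
      simp only [mul_one] at h4
      exact h4.trans (by decide)
    rw [Finset.sum_congr rfl (fun p _ => h3 p)] at h2
    rwa [Finset.sum_const, nsmul_eq_mul, mul_one] at h2
  have hdvd : 2 ∣ S.card := (ZMod.natCast_eq_zero_iff S.card 2).mp hpar
  have hne : S.Nonempty := by
    rcases Finset.eq_empty_or_nonempty S with h | h
    · exfalso
      apply hv0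
      funext p
      have hp : p ∉ S := by rw [h]; exact Finset.notMem_empty p
      rw [hS, Finset.mem_filter] at hp
      simp only [Finset.mem_univ, true_and, not_not] at hp
      exact hp
    · exact h
  have hpos : 0 < S.card := Finset.card_pos.mpr hne
  have hcard : S.card = 2 ∨ S.card = 4 := by omega
  rcases hcard with h | h
  · obtain ⟨p, q, hpq, hSeq⟩ := Finset.card_eq_two.mp h
    have hrow2 : ∀ i, Hmat n i p + Hmat n i q = 0 := by
      intro i
      have := hrowS i
      rwa [hSeq, Finset.sum_insert (by simp [hpq]), Finset.sum_singleton] at this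
    have h1 := hrow2 (r0 hn p)
    rw [H_at_r0 hn p p, H_at_r0 hn p q, if_pos rfl] at h1
    have hA : colA q = colA p := by
      by_contra hc
      rw [if_neg hc] at h1
      exact absurd h1 (by decide)
    have h2 := hrow2 (r1 hn p)
    rw [H_at_r1 hn p p, H_at_r1 hn p q, if_pos rfl] at h2
    have hB : colB q = colB p := by
      by_contra hc
      rw [if_neg hc] at h2
      exact absurd h2 (by decide)
    exact hpq (eq_of_A_B hn hA hB).symm
  · obtain ⟨p1, T1, hm1, hT1, hc1⟩ := Finset.card_eq_succ.mp (by rw [h] : S.card = 3 + 1)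
    obtain ⟨p2, T2, hm2, hT2, hc2⟩ := Finset.card_eq_succ.mp (by rw [hc1] : T1.card = 2 + 1)
    obtain ⟨p3, T3, hm3, hT3, hc3⟩ := Finset.card_eq_succ.mp (by rw [hc2] : T2.card = 1 + 1)
    obtain ⟨p4, hT4⟩ := Finset.card_eq_one.mp hc3
    rw [← hT3, hT4] at hm2 hT2
    rw [← hT2] at hm1 hT1
    simp only [Finset.mem_insert, Finset.mem_singleton, not_or] at hm1 hm2 hm3
    rw [hT4] at hm3
    simp only [Finset.mem_singleton] at hm3
    have hrow4 : ∀ i, Hmat n i p1 + Hmat n i p2 + Hmat n i p3 + Hmat n i p4 = 0 := by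
      intro i
      have h0 := hrowS i
      rw [← hT1, Finset.sum_insert (by simp [hm1.1, hm1.2.1, hm1.2.2]),
        Finset.sum_insert (by simp [hm2.1, hm2.2]),
        Finset.sum_insert (by simp [hm3]), Finset.sum_singleton] at h0
      linear_combination h0
    exact weight4 hn hodd p1 p2 p3 p4 hm1.1 hm1.2.1 hm1.2.2 hm2.1 hm2.2 hm3 hrow4

lemma H_split (hn : 7 ≤ n) (i : Fin (6 * n)) (p : ColIdx n) :
    Hmat n i p = (if (i : ℕ) = colA p then (1 : ZMod 2) else 0)
      + (if (i : ℕ) = colB p + 2 * n then (1 : ZMod 2) else 0)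
      + (if (i : ℕ) = colC p + 4 * n then (1 : ZMod 2) else 0) := by
  have ha := colA_lt p; have hb := colB_lt hn p; have hc := colC_lt hn p
  rcases Hmat_zero_or_one i p with h | h
  · rw [h]
    have hno : ¬((i : ℕ) = colA p ∨ (i : ℕ) = colB p + 2 * n
        ∨ (i : ℕ) = colC p + 4 * n) := by
      intro hd
      rw [(Hmat_eq_one_iff i p).mpr hd] at h
      exact absurd h (by decide)
    push_neg at hno
    rw [if_neg hno.1, if_neg hno.2.1, if_neg hno.2.2]
    norm_num
  · rw [h]
    rcases (Hmat_eq_one_iff i p).mp h with h1 | h1 | h1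
    · rw [if_pos h1, if_neg (by omega), if_neg (by omega)]; norm_num
    · rw [if_neg (by omega), if_pos h1, if_neg (by omega)]; norm_num
    · rw [if_neg (by omega), if_neg (by omega), if_pos h1]; norm_num

def cA (hn : 7 ≤ n) (j a : ℕ) (hj : j < n) (ha : a < 2 * n) : ColIdx n :=
  ⟨(⟨j, by omega⟩, ⟨a, ha⟩), by show j ≠ n; omega⟩

lemma colA_cA (hn : 7 ≤ n) (j a : ℕ) (hj : j < n) (ha : a < 2 * n) :
    colA (cA hn j a hj ha) = a := rfl

lemma colB_cA (hn : 7 ≤ n) (j a : ℕ) (hj : j < n) (ha : a < 2 * n)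
    (hja : j + a < 2 * n) : colB (cA hn j a hj ha) = j + a := by
  show (j + a) % (2 * n) = j + a
  exact Nat.mod_eq_of_lt hja

lemma colC_cA (hn : 7 ≤ n) (j a : ℕ) (hj : j < n) (ha : a < 2 * n)
    (hja : 2 * j + 1 + a < 2 * n) : colC (cA hn j a hj ha) = 2 * j + 1 + a := by
  show (xfun n j + a) % (2 * n) = 2 * j + 1 + a
  unfold xfun
  rw [if_pos hj]
  exact Nat.mod_eq_of_lt hja

lemma dec10 : ∀ x0 x2 x4 y3 y4 y5 z5 z7 z9 : ZMod 2,
    (x0 + y3 + z7) + (x0 + y4 + z9) + (x2 + y3 + z5) + (x2 + y5 + z9)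
      + (x4 + y4 + z5) + (x4 + y5 + z7) = 0 := by decide

lemma exists_weight6 (hn : 7 ≤ n) (hodd : Odd n) :
    ∃ v : ColIdx n → ZMod 2, v ≠ 0 ∧ (Hmat n).mulVec v = 0 ∧
      (Finset.univ.filter fun p : ColIdx n => v p ≠ 0).card = 6 := by
  haveI : NeZero (2 * n) := ⟨by omega⟩
  set p1 := cA hn 3 0 (by omega) (by omega) with hp1
  set p2 := cA hn 4 0 (by omega) (by omega) with hp2
  set p3 := cA hn 1 2 (by omega) (by omega) with hp3
  set p4 := cA hn 3 2 (by omega) (by omega) with hp4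
  set p5 := cA hn 0 4 (by omega) (by omega) with hp5
  set p6 := cA hn 1 4 (by omega) (by omega) with hp6
  have hne : p1 ≠ p2 ∧ p1 ≠ p3 ∧ p1 ≠ p4 ∧ p1 ≠ p5 ∧ p1 ≠ p6 ∧ p2 ≠ p3 ∧ p2 ≠ p4
      ∧ p2 ≠ p5 ∧ p2 ≠ p6 ∧ p3 ≠ p4 ∧ p3 ≠ p5 ∧ p3 ≠ p6 ∧ p4 ≠ p5 ∧ p4 ≠ p6
      ∧ p5 ≠ p6 := by
    refine ⟨?_, ?_, ?_, ?_, ?_, ?_, ?_, ?_, ?_, ?_, ?_, ?_, ?_, ?_, ?_⟩ <;>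
      · simp only [hp1, hp2, hp3, hp4, hp5, hp6, cA, Ne, Subtype.mk.injEq,
          Prod.mk.injEq, Fin.mk.injEq]
        omega
  obtain ⟨n12, n13, n14, n15, n16, n23, n24, n25, n26, n34, n35, n36, n45, n46, n56⟩ := hne
  set T : Finset (ColIdx n) := {p1, p2, p3, p4, p5, p6} with hT
  set v : ColIdx n → ZMod 2 := fun p => if p ∈ T then 1 else 0 with hv
  have hVmem : ∀ p, v p ≠ 0 ↔ p ∈ T := by
    intro p
    show (if p ∈ T then (1 : ZMod 2) else 0) ≠ 0 ↔ p ∈ T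
    split_ifs with h <;> simp [h]
  refine ⟨v, ?_, ?_, ?_⟩
  · intro h0
    have h1 : v p1 = 0 := by rw [h0]; rfl
    have h2 : v p1 = 1 := by
      show (if p1 ∈ T then (1 : ZMod 2) else 0) = 1
      rw [if_pos (by simp [hT])]
    rw [h1] at h2
    exact absurd h2.symm (by decide)
  · funext i
    have hsum : (Hmat n).mulVec v i = ∑ p ∈ T, Hmat n i p := by
      show ∑ p, Hmat n i p * v p = _
      rw [hv]
      simp only [mul_ite, mul_one, mul_zero]
      rw [Finset.sum_ite_mem, Finset.univ_inter]
    rw [hsum]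
    rw [hT, Finset.sum_insert (by simp [n12, n13, n14, n15, n16]),
      Finset.sum_insert (by simp [n23, n24, n25, n26]),
      Finset.sum_insert (by simp [n34, n35, n36]),
      Finset.sum_insert (by simp [n45, n46]),
      Finset.sum_insert (by simp [n56]), Finset.sum_singleton]
    have e1 : Hmat n i p1 = (if (i : ℕ) = 0 then (1 : ZMod 2) else 0)
        + (if (i : ℕ) = 3 + 2 * n then (1 : ZMod 2) else 0)
        + (if (i : ℕ) = 7 + 4 * n then (1 : ZMod 2) else 0) := by
      rw [H_split hn i p1, hp1, colA_cA, colB_cA hn 3 0 (by omega) (by omega) (by omega),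
        colC_cA hn 3 0 (by omega) (by omega) (by omega)]
    have e2 : Hmat n i p2 = (if (i : ℕ) = 0 then (1 : ZMod 2) else 0)
        + (if (i : ℕ) = 4 + 2 * n then (1 : ZMod 2) else 0)
        + (if (i : ℕ) = 9 + 4 * n then (1 : ZMod 2) else 0) := by
      rw [H_split hn i p2, hp2, colA_cA, colB_cA hn 4 0 (by omega) (by omega) (by omega),
        colC_cA hn 4 0 (by omega) (by omega) (by omega)]
    have e3 : Hmat n i p3 = (if (i : ℕ) = 2 then (1 : ZMod 2) else 0)
        + (if (i : ℕ) = 3 + 2 * n then (1 : ZMod 2) else 0)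
        + (if (i : ℕ) = 5 + 4 * n then (1 : ZMod 2) else 0) := by
      rw [H_split hn i p3, hp3, colA_cA, colB_cA hn 1 2 (by omega) (by omega) (by omega),
        colC_cA hn 1 2 (by omega) (by omega) (by omega)]
    have e4 : Hmat n i p4 = (if (i : ℕ) = 2 then (1 : ZMod 2) else 0)
        + (if (i : ℕ) = 5 + 2 * n then (1 : ZMod 2) else 0)
        + (if (i : ℕ) = 9 + 4 * n then (1 : ZMod 2) else 0) := by
      rw [H_split hn i p4, hp4, colA_cA, colB_cA hn 3 2 (by omega) (by omega) (by omega),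
        colC_cA hn 3 2 (by omega) (by omega) (by omega)]
    have e5 : Hmat n i p5 = (if (i : ℕ) = 4 then (1 : ZMod 2) else 0)
        + (if (i : ℕ) = 4 + 2 * n then (1 : ZMod 2) else 0)
        + (if (i : ℕ) = 5 + 4 * n then (1 : ZMod 2) else 0) := by
      rw [H_split hn i p5, hp5, colA_cA, colB_cA hn 0 4 (by omega) (by omega) (by omega),
        colC_cA hn 0 4 (by omega) (by omega) (by omega)]
    have e6 : Hmat n i p6 = (if (i : ℕ) = 4 then (1 : ZMod 2) else 0)
        + (if (i : ℕ) = 5 + 2 * n then (1 : ZMod 2) else 0)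
        + (if (i : ℕ) = 7 + 4 * n then (1 : ZMod 2) else 0) := by
      rw [H_split hn i p6, hp6, colA_cA, colB_cA hn 1 4 (by omega) (by omega) (by omega),
        colC_cA hn 1 4 (by omega) (by omega) (by omega)]
    rw [e1, e2, e3, e4, e5, e6]
    show _ = (0 : Fin (6 * n) → ZMod 2) i
    rw [show (0 : Fin (6 * n) → ZMod 2) i = 0 from rfl]
    linear_combination dec10 (if (i : ℕ) = 0 then (1 : ZMod 2) else 0)
      (if (i : ℕ) = 2 then (1 : ZMod 2) else 0)
      (if (i : ℕ) = 4 then (1 : ZMod 2) else 0)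
      (if (i : ℕ) = 3 + 2 * n then (1 : ZMod 2) else 0)
      (if (i : ℕ) = 4 + 2 * n then (1 : ZMod 2) else 0)
      (if (i : ℕ) = 5 + 2 * n then (1 : ZMod 2) else 0)
      (if (i : ℕ) = 5 + 4 * n then (1 : ZMod 2) else 0)
      (if (i : ℕ) = 7 + 4 * n then (1 : ZMod 2) else 0)
      (if (i : ℕ) = 9 + 4 * n then (1 : ZMod 2) else 0)
  · have : (Finset.univ.filter fun p : ColIdx n => v p ≠ 0) = T := by
      ext p
      simp only [Finset.mem_filter, Finset.mem_univ, true_and]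
      exact hVmem p
    rw [this, hT]
    rw [Finset.card_insert_of_notMem (by simp [n12, n13, n14, n15, n16]),
      Finset.card_insert_of_notMem (by simp [n23, n24, n25, n26]),
      Finset.card_insert_of_notMem (by simp [n34, n35, n36]),
      Finset.card_insert_of_notMem (by simp [n45, n46]),
      Finset.card_insert_of_notMem (by simp [n56]), Finset.card_singleton]

end Aux17

theorem stmt17 (n : ℕ) (hn : 7 ≤ n) (hodd : Odd n) :
    -- (i) every column of H has exactly 3 ones and every row exactly 2n-1 ones
    (∀ p : ColIdx n,
      (Finset.univ.filter fun i : Fin (6 * n) => Hmat n i p = 1).card = 3) ∧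
    (∀ i : Fin (6 * n),
      (Finset.univ.filter fun p : ColIdx n => Hmat n i p = 1).card = 2 * n - 1) ∧
    -- (ii) inner products over ℤ of distinct rows, and of distinct columns, are ≤ 1
    (∀ i i' : Fin (6 * n), i ≠ i' →
      (∑ p : ColIdx n, HmatZ n i p * HmatZ n i' p) ≤ 1) ∧
    (∀ p p' : ColIdx n, p ≠ p' →
      (∑ i : Fin (6 * n), HmatZ n i p * HmatZ n i p') ≤ 1) ∧
    -- (iii) the rank of H over GF(2) is 6n-2, the null space has dimension 4n²-8n+2,
    -- and the rate is (4n²-8n+2)/(4n²-2n)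
    (Hmat n).rank = 6 * n - 2 ∧
    Module.finrank (ZMod 2) (LinearMap.ker (Hmat n).mulVecLin) = 4 * n ^ 2 - 8 * n + 2 ∧
    ((4 * n ^ 2 - 2 * n : ℚ) - ((Hmat n).rank : ℚ)) / (4 * n ^ 2 - 2 * n : ℚ) =
      ((4 * n ^ 2 - 8 * n + 2 : ℕ) : ℚ) / (4 * n ^ 2 - 2 * n : ℚ) ∧
    -- (iv) the minimum Hamming weight of a nonzero codeword is exactly 6
    (∀ v : ColIdx n → ZMod 2, v ≠ 0 → (Hmat n).mulVec v = 0 →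
      6 ≤ (Finset.univ.filter fun p : ColIdx n => v p ≠ 0).card) ∧
    (∃ v : ColIdx n → ZMod 2, v ≠ 0 ∧ (Hmat n).mulVec v = 0 ∧
      (Finset.univ.filter fun p : ColIdx n => v p ≠ 0).card = 6) := by
  have h7n : 7 * n ≤ n ^ 2 := by
    rw [pow_two]
    exact Nat.mul_le_mul_right n hn
  refine ⟨Aux17.card_col hn, Aux17.card_row hn, Aux17.row_inner hn, Aux17.col_inner hn,
    Aux17.rank_H hn hodd, Aux17.nullity hn hodd, ?_, Aux17.min_weight hn hodd,
    Aux17.exists_weight6 hn hodd⟩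
  rw [Aux17.rank_H hn hodd]
  congr 1
  rw [Nat.cast_sub (show 2 ≤ 6 * n by omega)]
  rw [Nat.cast_add, Nat.cast_sub (show 8 * n ≤ 4 * n ^ 2 by omega)]
  push_cast
  ring
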